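/- Let x₁ ∼ p_data, t ∼ U(0,1), x_t ∼ p_t(·|x₁), and define the marginal velocity u_t(x) = E[u_t(x|x₁) | x_t = x]. Then for any measurable vector field v, the marginal objective E‖u_t(x_t) − v(t,x_t)‖² and the conditional objective E‖u_t(x_t|x₁) − v(t,x_t)‖² differ by a constant independent of v; in particular E‖u_t(x_t|x₁) − v(t,x_t)‖² = E‖u_t(x_t) − v(t,x_t)‖² + E‖u_t(x_t|x₁) − u_t(x_t)‖². -/

import Mathlib

open MeasureTheory

lemma condexp_ae_eq_condexpL2' {α F : Type*} [NormedAddCommGroup F] [InnerProductSpace ℝ F]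
    [CompleteSpace F]
    {m m0 : MeasurableSpace α} (hm : m ≤ m0) {μ : Measure α} [IsProbabilityMeasure μ]
    {f : α → F} (hf : MemLp f 2 μ) :
    μ[f|m] =ᵐ[μ] (condExpL2 F ℝ hm (hf.toLp f) : α → F) := by
  haveI : IsFiniteMeasure (μ.trim hm) := isFiniteMeasure_trim hm
  refine (ae_eq_condExp_of_forall_setIntegral_eq hm (hf.integrable one_le_two)
    (fun s hs hμs => integrableOn_condExpL2_of_measure_ne_top hm hμs.ne _)
    (fun s hs hμs => ?_) (aestronglyMeasurable_condExpL2 hm _)).symm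
  rw [integral_condExpL2_eq hm (hf.toLp f) hs hμs.ne]
  exact setIntegral_congr_ae (hm s hs) ((hf.coeFn_toLp).mono fun x hx _ => hx)

lemma integral_inner_sub_condexp_eq_zero {α F : Type*} [NormedAddCommGroup F]
    [InnerProductSpace ℝ F] [CompleteSpace F]
    {m m0 : MeasurableSpace α} (hm : m ≤ m0) {μ : Measure α} [IsProbabilityMeasure μ]
    {f g : α → F} (hf : MemLp f 2 μ) (hg : MemLp g 2 μ)
    (hgm : AEStronglyMeasurable[m] g μ) :
    ∫ x, (inner ℝ (f x - (μ[f|m]) x) (g x) : ℝ) ∂μ = 0 := by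
  have hce := condexp_ae_eq_condexpL2' hm hf
  have hgL : (hg.toLp g : α → F) =ᵐ[μ] g := hg.coeFn_toLp
  have hgm' : AEStronglyMeasurable[m] (hg.toLp g : α → F) μ := hgm.congr hgL.symm
  have hfL : (hf.toLp f : α → F) =ᵐ[μ] f := hf.coeFn_toLp
  have key : @inner ℝ _ _ ((condExpL2 F ℝ hm (hf.toLp f) : α →₂[μ] F)) (hg.toLp g)
      = @inner ℝ _ _ (hf.toLp f) (hg.toLp g) :=
    inner_condExpL2_eq_inner_fun hm (hf.toLp f) (hg.toLp g) hgm'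
  have h1 : ∫ x, (inner ℝ (f x - (μ[f|m]) x) (g x) : ℝ) ∂μ
      = ∫ x, (inner ℝ ((hf.toLp f : α → F) x - (condExpL2 F ℝ hm (hf.toLp f) : α → F) x)
          ((hg.toLp g : α → F) x) : ℝ) ∂μ := by
    refine integral_congr_ae ?_
    filter_upwards [hce, hgL, hfL] with x h1 h2 h3
    rw [h1, h2, h3]
  rw [h1]
  have h2 : ∀ x, (inner ℝ ((hf.toLp f : α → F) x - (condExpL2 F ℝ hm (hf.toLp f) : α → F) x)
        ((hg.toLp g : α → F) x) : ℝ)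
      = (inner ℝ ((hf.toLp f : α → F) x) ((hg.toLp g : α → F) x) : ℝ)
        - (inner ℝ ((condExpL2 F ℝ hm (hf.toLp f) : α → F) x) ((hg.toLp g : α → F) x) : ℝ) := by
    intro x; rw [inner_sub_left]
  simp_rw [h2]
  rw [integral_sub (L2.integrable_inner _ _) (L2.integrable_inner _ _)]
  have e1 : ∫ x, (inner ℝ ((hf.toLp f : α → F) x) ((hg.toLp g : α → F) x) : ℝ) ∂μ
      = @inner ℝ _ _ (hf.toLp f) (hg.toLp g) := (L2.inner_def _ _).symm
  have e2 : ∫ x, (inner ℝ ((condExpL2 F ℝ hm (hf.toLp f) : α → F) x) ((hg.toLp g : α → F) x) : ℝ) ∂μ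
      = @inner ℝ _ _ ((condExpL2 F ℝ hm (hf.toLp f) : α →₂[μ] F)) (hg.toLp g) :=
    (L2.inner_def _ _).symm
  rw [e1, e2, key, sub_self]

lemma memLp_two_integrable_inner {α F : Type*} [NormedAddCommGroup F] [InnerProductSpace ℝ F]
    {m0 : MeasurableSpace α} {μ : Measure α}
    {f g : α → F} (hf : MemLp f 2 μ) (hg : MemLp g 2 μ) :
    Integrable (fun x => (inner ℝ (f x) (g x) : ℝ)) μ := by
  refine (L2.integrable_inner (𝕜 := ℝ) (hf.toLp _) (hg.toLp _)).congr ?_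
  filter_upwards [hf.coeFn_toLp, hg.coeFn_toLp] with x h1 h2
  rw [h1, h2]


/-- in the conditional flow-matching setting, with `Y ω = u_{t(ω)}(x_t(ω) | x₁(ω))`
the conditional velocity and `Ybar = E[Y | σ(t, x_t)]` the marginal velocity, for any
measurable vector field `v` the conditional and marginal objectives satisfy
`E‖Y − v(t,x_t)‖² = E‖Ybar − v(t,x_t)‖² + E‖Y − Ybar‖²`; in particular they differ
by a constant independent of `v`. -/
theorem conditional_vs_marginal_objective {d : ℕ}
    {Ω : Type*} [m0 : MeasurableSpace Ω] (P : Measure Ω) [IsProbabilityMeasure P]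
    (T : Ω → ℝ) (Xt : Ω → EuclideanSpace ℝ (Fin d))
    -- the conditional velocity evaluated along the trajectory: Y ω = u_{T ω}(Xt ω | X₁ ω)
    (Y : Ω → EuclideanSpace ℝ (Fin d))
    (hY : MemLp Y 2 P)
    -- sub-σ-algebra generated by (t, x_t)
    (m : MeasurableSpace Ω)
    (hm_def : m = MeasurableSpace.comap (fun ω => (T ω, Xt ω)) inferInstance)
    (hm : m ≤ m0)
    -- the marginal velocity field u_t(x) = E[Y | x_t = x, t], as a function on Ω
    (Ybar : Ω → EuclideanSpace ℝ (Fin d))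
    (hYbar : Ybar = P[Y | m])
    -- an arbitrary measurable vector field v(t, x) with square-integrable composite
    (v : ℝ → EuclideanSpace ℝ (Fin d) → EuclideanSpace ℝ (Fin d))
    (hv : Measurable (Function.uncurry v))
    (hvL2 : MemLp (fun ω => v (T ω) (Xt ω)) 2 P) :
    ∫ ω, ‖Y ω - v (T ω) (Xt ω)‖ ^ 2 ∂P
      = ∫ ω, ‖Ybar ω - v (T ω) (Xt ω)‖ ^ 2 ∂P + ∫ ω, ‖Y ω - Ybar ω‖ ^ 2 ∂P := by
  haveI : IsFiniteMeasure (P.trim hm) := isFiniteMeasure_trim hm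
  have hpair : Measurable[m] fun ω => (T ω, Xt ω) := by
    rw [hm_def]; exact measurable_iff_comap_le.mpr le_rfl
  have hVm : StronglyMeasurable[m] fun ω => v (T ω) (Xt ω) :=
    (hv.comp hpair).stronglyMeasurable
  have hce := condexp_ae_eq_condexpL2' hm hY
  have hYbar_ae : Ybar =ᵐ[P]
      (condExpL2 (EuclideanSpace ℝ (Fin d)) ℝ hm (hY.toLp Y) : Ω → EuclideanSpace ℝ (Fin d)) :=
    hYbar ▸ hce
  have hYbar2 : MemLp Ybar 2 P :=
    (Lp.memLp ((condExpL2 (EuclideanSpace ℝ (Fin d)) ℝ hm (hY.toLp Y) :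
      Lp (EuclideanSpace ℝ (Fin d)) 2 P))).ae_eq hYbar_ae.symm
  have hYbarm : StronglyMeasurable[m] Ybar := hYbar ▸ stronglyMeasurable_condExp
  have hg2 : MemLp (fun ω => Ybar ω - v (T ω) (Xt ω)) 2 P := hYbar2.sub hvL2
  have hgm : AEStronglyMeasurable[m] (fun ω => Ybar ω - v (T ω) (Xt ω)) P :=
    (hYbarm.sub hVm).aestronglyMeasurable
  have horth : ∫ ω, (inner ℝ (Y ω - Ybar ω) (Ybar ω - v (T ω) (Xt ω)) : ℝ) ∂P = 0 := by
    have h := integral_inner_sub_condexp_eq_zero hm hY hg2 hgm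
    rw [← hYbar] at h
    exact h
  have hA2 : MemLp (fun ω => Y ω - Ybar ω) 2 P := hY.sub hYbar2
  have hIA : Integrable (fun ω => ‖Y ω - Ybar ω‖ ^ 2) P :=
    (memLp_two_iff_integrable_sq_norm hA2.aestronglyMeasurable).mp hA2
  have hIB : Integrable (fun ω => ‖Ybar ω - v (T ω) (Xt ω)‖ ^ 2) P :=
    (memLp_two_iff_integrable_sq_norm hg2.aestronglyMeasurable).mp hg2
  have hIinner : Integrable (fun ω => (inner ℝ (Y ω - Ybar ω) (Ybar ω - v (T ω) (Xt ω)) : ℝ)) P :=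
    memLp_two_integrable_inner hA2 hg2
  have hpt : ∀ ω, ‖Y ω - v (T ω) (Xt ω)‖ ^ 2
      = ‖Ybar ω - v (T ω) (Xt ω)‖ ^ 2 + ‖Y ω - Ybar ω‖ ^ 2
        + 2 * (inner ℝ (Y ω - Ybar ω) (Ybar ω - v (T ω) (Xt ω)) : ℝ) := by
    intro ω
    have h := @norm_add_sq_real (EuclideanSpace ℝ (Fin d)) _ _
      (Y ω - Ybar ω) (Ybar ω - v (T ω) (Xt ω))
    rw [sub_add_sub_cancel] at h
    rw [h]; ring
  calc ∫ ω, ‖Y ω - v (T ω) (Xt ω)‖ ^ 2 ∂P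
      = ∫ ω, (‖Ybar ω - v (T ω) (Xt ω)‖ ^ 2 + ‖Y ω - Ybar ω‖ ^ 2
          + 2 * (inner ℝ (Y ω - Ybar ω) (Ybar ω - v (T ω) (Xt ω)) : ℝ)) ∂P := by
        exact integral_congr_ae (Filter.Eventually.of_forall hpt)
    _ = ∫ ω, ‖Ybar ω - v (T ω) (Xt ω)‖ ^ 2 ∂P + ∫ ω, ‖Y ω - Ybar ω‖ ^ 2 ∂P
          + 2 * ∫ ω, (inner ℝ (Y ω - Ybar ω) (Ybar ω - v (T ω) (Xt ω)) : ℝ) ∂P := by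
        have hIBA : Integrable
            (fun ω => ‖Ybar ω - v (T ω) (Xt ω)‖ ^ 2 + ‖Y ω - Ybar ω‖ ^ 2) P := hIB.add hIA
        rw [integral_add hIBA (hIinner.const_mul 2), integral_add hIB hIA, integral_const_mul]
    _ = ∫ ω, ‖Ybar ω - v (T ω) (Xt ω)‖ ^ 2 ∂P + ∫ ω, ‖Y ω - Ybar ω‖ ^ 2 ∂P := by
        rw [horth]; ring
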